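/- Let f : U → P*(S^(n)) be a regular asynchronous system with f ⊂ Ξ_Φ, i.e., f(u) ⊆ Ξ_Φ(u) for all u ∈ U, where f(u) is always nonempty. Then there exists a function π assigning to each pair (μ,u) with u ∈ U and μ ∈ φ_0(u) (φ_0(u) = {x(-∞+0) | x ∈ f(u)} being the set of initial values) a nonempty set π(μ,u) of progressive functions, such that for all u ∈ U, f(u) = {Φ^ρ(μ,u,·) | μ ∈ φ_0(u), ρ ∈ π(μ,u)}. Conversely, if such π exists, then f ⊂ Ξ_Φ. -/

import Mathlib

open scoped Classical

namespace AS

/-- A sequence `α : ℕ → 𝔹ⁿ` is progressive if every coordinate takes the value 1 infinitely often. -/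
def ProgSeq {n : ℕ} (α : ℕ → Fin n → Bool) : Prop :=
  ∀ i : Fin n, {k : ℕ | α k i = true}.Infinite

/-- Identification of `𝔹^{n'} × 𝔹^{n''}` with `𝔹^{n'+n''}`. -/
def app {n' n'' : ℕ} (x : Fin n' → Bool) (y : Fin n'' → Bool) : Fin (n' + n'') → Bool :=
  Fin.addCases x y

/-- The first `n'` coordinates. -/
def fstPart {n' n'' : ℕ} (μ : Fin (n' + n'') → Bool) : Fin n' → Bool :=
  fun i => μ (Fin.castAdd n'' i)

/-- The last `n''` coordinates. -/
def sndPart {n' n'' : ℕ} (μ : Fin (n' + n'') → Bool) : Fin n'' → Bool :=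
  fun i => μ (Fin.natAdd n' i)

/-- Parallel connection of generator functions. -/
def par {n' n'' m : ℕ} (Φ' : (Fin n' → Bool) → (Fin m → Bool) → Fin n' → Bool)
    (Φ'' : (Fin n'' → Bool) → (Fin m → Bool) → Fin n'' → Bool) :
    (Fin (n' + n'') → Bool) → (Fin m → Bool) → Fin (n' + n'') → Bool :=
  fun μ lam => app (Φ' (fstPart μ) lam) (Φ'' (sndPart μ) lam)

/-- `μ` with coordinate `j` complemented. -/
def negAt {n : ℕ} (μ : Fin n → Bool) (j : Fin n) : Fin n → Bool :=
  Function.update μ j (!(μ j))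

/-- Boolean partial derivative of `Φ_i` with respect to `μ_j`. -/
def bderiv {n m : ℕ} (Φ : (Fin n → Bool) → (Fin m → Bool) → Fin n → Bool)
    (i j : Fin n) (μ : Fin n → Bool) (lam : Fin m → Bool) : Bool :=
  xor (Φ μ lam i) (Φ (negAt μ j) lam i)

/-- `Φ^ν`. -/
def nuAct {n m : ℕ} (Φ : (Fin n → Bool) → (Fin m → Bool) → Fin n → Bool)
    (ν μ : Fin n → Bool) (lam : Fin m → Bool) : Fin n → Bool :=
  fun i => xor ((!(ν i)) && μ i) (ν i && Φ μ lam i)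

/-- The iterates: `iter Φ α lam μ 0 = ω₋₁ = μ`, `iter Φ α lam μ (k+1) = ωₖ = Φ^{α k}(ω_{k-1}, lam k)`. -/
def iter {n m : ℕ} (Φ : (Fin n → Bool) → (Fin m → Bool) → Fin n → Bool)
    (α : ℕ → Fin n → Bool) (lam : ℕ → Fin m → Bool) (μ : Fin n → Bool) : ℕ → Fin n → Bool
  | 0 => μ
  | k + 1 => nuAct Φ (α k) (iter Φ α lam μ k) (lam k)

/-- A strictly increasing sequence of reals, unbounded from above. -/
def IsSeq (t : ℕ → ℝ) : Prop :=
  StrictMono t ∧ ∀ T : ℝ, ∃ k, T < t k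

/-- The function `ρ(s) = ⊕ₖ α(k)·χ_{{t_k}}(s)`. -/
noncomputable def progFun {n : ℕ} (α : ℕ → Fin n → Bool) (t : ℕ → ℝ) : ℝ → Fin n → Bool :=
  fun s i => decide (∃ k, s = t k ∧ α k i = true)

/-- A progressive function `ℝ → 𝔹ⁿ`. -/
def IsProgFun {n : ℕ} (ρ : ℝ → Fin n → Bool) : Prop :=
  ∃ α t, ProgSeq α ∧ IsSeq t ∧ ρ = progFun α t

/-- The data of a progressive function: a progressive sequence of vectors on an
unbounded strictly increasing support sequence. -/
structure PF (n : ℕ) where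
  α : ℕ → Fin n → Bool
  t : ℕ → ℝ
  mono : StrictMono t
  unbdd : ∀ T : ℝ, ∃ k, T < t k
  prog : ProgSeq α

/-- The underlying progressive function `ℝ → 𝔹ⁿ` of `ρ : PF n`. -/
noncomputable def PF.toFun {n : ℕ} (ρ : PF n) : ℝ → Fin n → Bool := progFun ρ.α ρ.t

/-- The signal `Φ^ρ(μ,u,·)`. -/
noncomputable def PF.run {n m : ℕ} (Φ : (Fin n → Bool) → (Fin m → Bool) → Fin n → Bool)
    (ρ : PF n) (μ : Fin n → Bool) (u : ℝ → Fin m → Bool) : ℝ → Fin n → Bool :=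
  fun s => iter Φ ρ.α (fun k => u (ρ.t k)) μ (Nat.find (ρ.unbdd s))

/-- The universal regular asynchronous system generated by `Φ`. -/
def Xi {n m : ℕ} (Φ : (Fin n → Bool) → (Fin m → Bool) → Fin n → Bool)
    (u : ℝ → Fin m → Bool) : Set (ℝ → Fin n → Bool) :=
  {x | ∃ (μ : Fin n → Bool) (ρ : PF n), x = PF.run Φ ρ μ u}

/-- `μ` is the initial value `x(-∞+0)` of `x`. -/
def InitVal {n : ℕ} (x : ℝ → Fin n → Bool) (μ : Fin n → Bool) : Prop :=
  ∃ T : ℝ, ∀ s < T, x s = μ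

/-- Projection of a progressive function onto the first `n'` coordinates. -/
def PF.fst {n' n'' : ℕ} (ρ : PF (n' + n'')) : PF n' :=
  ⟨fun k => fstPart (ρ.α k), ρ.t, ρ.mono, ρ.unbdd, fun i => ρ.prog (Fin.castAdd n'' i)⟩

/-- Projection of a progressive function onto the last `n''` coordinates. -/
def PF.snd {n' n'' : ℕ} (ρ : PF (n' + n'')) : PF n'' :=
  ⟨fun k => sndPart (ρ.α k), ρ.t, ρ.mono, ρ.unbdd, fun i => ρ.prog (Fin.natAdd n' i)⟩

/-- `x` is a signal: eventually constant to the left, piecewise constant on `[t_k, t_{k+1})`. -/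
def IsSignal {n : ℕ} (x : ℝ → Fin n → Bool) : Prop :=
  ∃ (μ : Fin n → Bool) (t : ℕ → ℝ), IsSeq t ∧ (∀ s, s < t 0 → x s = μ) ∧
    ∀ k, ∀ s, t k ≤ s → s < t (k + 1) → x s = x (t k)

end AS

/-- a system `f` (with nonempty values) satisfies `f ⊂ Ξ_Φ` if and only if there
exists a computation function `π`, defined (with nonempty values) on the pairs `(μ,u)` with
`u ∈ U` and `μ ∈ φ₀(u)`, such that `f(u) = {Φ^ρ(μ,u,·) | μ ∈ φ₀(u), ρ ∈ π(μ,u)}` for all `u ∈ U`. -/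

theorem AS.initVal_run {n m : ℕ} (Φ : (Fin n → Bool) → (Fin m → Bool) → Fin n → Bool)
    (ρ : AS.PF n) (μ : Fin n → Bool) (u : ℝ → Fin m → Bool) :
    AS.InitVal (AS.PF.run Φ ρ μ u) μ := by
  refine ⟨ρ.t 0, fun s hs => ?_⟩
  have h0 : Nat.find (ρ.unbdd s) = 0 := (Nat.find_eq_zero _).2 hs
  simp [AS.PF.run, h0, AS.iter]

theorem AS.initVal_unique {n : ℕ} {x : ℝ → Fin n → Bool} {μ μ' : Fin n → Bool}
    (h : AS.InitVal x μ) (h' : AS.InitVal x μ') : μ = μ' := by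
  obtain ⟨T, hT⟩ := h
  obtain ⟨T', hT'⟩ := h'
  have hs : min T T' - 1 < min T T' := by linarith
  have := hT _ (hs.trans_le (min_le_left _ _))
  have := hT' _ (hs.trans_le (min_le_right _ _))
  grind

theorem regular_iff_computation_function {n m : ℕ}
    (Φ : (Fin n → Bool) → (Fin m → Bool) → Fin n → Bool)
    (U : Set (ℝ → Fin m → Bool)) (hU : U.Nonempty)
    (f : (ℝ → Fin m → Bool) → Set (ℝ → Fin n → Bool))
    (hne : ∀ u ∈ U, (f u).Nonempty) :
    (∀ u ∈ U, f u ⊆ AS.Xi Φ u) ↔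
      ∃ π : (Fin n → Bool) → (ℝ → Fin m → Bool) → Set (AS.PF n),
        (∀ u ∈ U, ∀ μ : Fin n → Bool, (∃ x ∈ f u, AS.InitVal x μ) → (π μ u).Nonempty) ∧
        (∀ u ∈ U, f u = {x | ∃ μ : Fin n → Bool, (∃ y ∈ f u, AS.InitVal y μ) ∧
          ∃ ρ ∈ π μ u, x = AS.PF.run Φ ρ μ u}) := by
  constructor
  · intro hsub
    refine ⟨fun μ u => {ρ | ∃ x ∈ f u, x = AS.PF.run Φ ρ μ u}, ?_, ?_⟩
    · rintro u hu μ ⟨x, hx, hμ⟩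
      obtain ⟨μ', ρ, hx'⟩ := hsub u hu hx
      have : μ = μ' := AS.initVal_unique hμ (hx' ▸ AS.initVal_run Φ ρ μ' u)
      exact ⟨ρ, x, hx, this ▸ hx'⟩
    · intro u hu
      ext x
      constructor
      · intro hx
        obtain ⟨μ, ρ, hx'⟩ := hsub u hu hx
        exact ⟨μ, ⟨x, hx, hx' ▸ AS.initVal_run Φ ρ μ u⟩, ρ, ⟨x, hx, hx'⟩, hx'⟩
      · rintro ⟨μ, -, ρ, ⟨x', hx', hx'eq⟩, rfl⟩
        exact hx'eq ▸ hx'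
  · rintro ⟨π, -, hπ⟩ u hu x hx
    rw [hπ u hu] at hx
    obtain ⟨μ, -, ρ, -, rfl⟩ := hx
    exact ⟨μ, ρ, rfl⟩
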